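/- Let k ≥ 3, r ≥ 2, n ≥ R(k;r), and set α = binom(R(k;r), k)^{-1}. For every coloring of the edges of K_n with r+1 colors, either the number of monochromatic copies of K_k whose color lies among the first r colors exceeds (α/2)·binom(n,k), or more than binom(n,2)/R(k;r)^2 edges receive color r+1. -/

import Mathlib

open Finset

/-- `K_n → (K_k)_r`: every `r`-coloring of the edges of the complete graph on `Fin n`
contains a monochromatic copy of `K_k`. -/
def ArrowsClique (n k r : ℕ) : Prop :=
  ∀ c : Sym2 (Fin n) → Fin r, ∃ i : Fin r, ∃ t : Finset (Fin n),
    t.card = k ∧ ∀ x ∈ t, ∀ y ∈ t, x ≠ y → c s(x, y) = i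

/-- The `r`-color Ramsey number `R(k;r)` for `K_k`. -/
noncomputable def ramseyNumber (k r : ℕ) : ℕ := sInf {n | ArrowsClique n k r}

def rbnd (r : ℕ) : ℕ → ℕ
  | 0 => 0
  | m + 1 => r * rbnd r m + 1

lemma greedy {n r : ℕ} (hr : 1 ≤ r) (c : Sym2 (Fin n) → Fin r) :
    ∀ m (V : Finset (Fin n)), rbnd r m ≤ V.card →
    ∃ (t : Finset (Fin n)) (f : Fin n → Fin r) (o : Fin n → ℕ),
      t ⊆ V ∧ t.card = m ∧ Set.InjOn o t ∧
      ∀ x ∈ t, ∀ y ∈ t, o x < o y → c s(x, y) = f x := by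
  intro m
  induction m with
  | zero =>
    intro V _
    exact ⟨∅, fun _ => ⟨0, hr⟩, fun _ => 0, by simp, by simp, by simp, by simp⟩
  | succ m ih =>
    intro V hV
    simp only [rbnd] at hV
    obtain ⟨v, hv⟩ : V.Nonempty := card_pos.mp (by omega)
    have hcard : (univ : Finset (Fin r)).card * rbnd r m ≤ (V.erase v).card := by
      rw [card_erase_of_mem hv, card_univ, Fintype.card_fin]; omega
    obtain ⟨i, -, hi⟩ := exists_le_card_fiber_of_mul_le_card_of_maps_to
      (f := fun w => c s(v, w)) (fun a _ => mem_univ _) ⟨⟨0, hr⟩, mem_univ _⟩ hcard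
    obtain ⟨t', f', o', hsub, hcardt, hinj, hcol⟩ := ih _ hi
    have hsubW : ∀ x ∈ t', x ∈ V.erase v ∧ c s(v, x) = i := by
      intro x hx
      have := hsub hx
      simp only [mem_filter] at this
      exact this
    have hvt' : v ∉ t' := fun h => (mem_erase.mp (hsubW v h).1).1 rfl
    have hmem : ∀ z, z ∈ insert v t' → z ≠ v → z ∈ t' :=
      fun z hz hzv => (mem_insert.mp hz).resolve_left hzv
    refine ⟨insert v t', Function.update f' v i, fun x => if x = v then 0 else o' x + 1,
      ?_, ?_, ?_, ?_⟩
    · intro x hx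
      rcases mem_insert.mp hx with rfl | hx
      · exact hv
      · exact mem_of_mem_erase (hsubW x hx).1
    · rw [card_insert_of_notMem hvt', hcardt]
    · intro x hx y hy hxy
      dsimp only at hxy
      simp only [mem_coe] at hx hy
      by_cases hxv : x = v <;> by_cases hyv : y = v
      · rw [hxv, hyv]
      · exfalso; rw [if_pos hxv, if_neg hyv] at hxy; omega
      · exfalso; rw [if_neg hxv, if_pos hyv] at hxy; omega
      · rw [if_neg hxv, if_neg hyv] at hxy
        exact hinj (mem_coe.mpr (hmem x hx hxv)) (mem_coe.mpr (hmem y hy hyv)) (by omega)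
    · intro x hx y hy hlt
      dsimp only at hlt
      have hyv : y ≠ v := by
        intro h
        rw [if_pos h] at hlt
        omega
      by_cases hxv : x = v
      · rw [hxv, Function.update_self]
        exact (hsubW y (hmem y hy hyv)).2
      · rw [Function.update_of_ne hxv]
        rw [if_neg hxv, if_neg hyv] at hlt
        exact hcol x (hmem x hx hxv) y (hmem y hy hyv) (by omega)

lemma arrowsClique_exists (k r : ℕ) (hr : 1 ≤ r) :
    ArrowsClique (rbnd r (r * (k - 1) + 1)) k r := by
  intro c
  obtain ⟨t, f, o, -, htcard, hinj, hcol⟩ :=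
    greedy hr c (r * (k - 1) + 1) univ (by simp)
  have hlt : (univ : Finset (Fin r)).card * (k - 1) < t.card := by
    rw [card_univ, Fintype.card_fin, htcard]; omega
  obtain ⟨i, -, hi⟩ := exists_lt_card_fiber_of_mul_lt_card_of_maps_to
    (f := f) (fun a _ => mem_univ _) hlt
  obtain ⟨s, hs, hscard⟩ := exists_subset_card_eq (s := t.filter (f · = i)) (n := k) (by omega)
  refine ⟨i, s, hscard, ?_⟩
  intro x hx y hy hxy
  have hxt := mem_filter.mp (hs hx)
  have hyt := mem_filter.mp (hs hy)
  rcases lt_trichotomy (o x) (o y) with h | h | h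
  · rw [hcol x hxt.1 y hyt.1 h, hxt.2]
  · exact absurd (hinj (mem_coe.mpr hxt.1) (mem_coe.mpr hyt.1) h) hxy
  · rw [Sym2.eq_swap, hcol y hyt.1 x hxt.1 h, hyt.2]

lemma arrowsClique_mono {n m k r : ℕ} (h : ArrowsClique n k r) (hnm : n ≤ m) :
    ArrowsClique m k r := by
  intro c
  obtain ⟨i, t, htc, hcol⟩ := h (fun e => c (e.map (Fin.castLE hnm)))
  refine ⟨i, t.image (Fin.castLE hnm), ?_, ?_⟩
  · rw [card_image_of_injective _ (Fin.castLE_injective hnm), htc]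
  · intro x hx y hy hxy
    obtain ⟨x', hx', rfl⟩ := mem_image.mp hx
    obtain ⟨y', hy', rfl⟩ := mem_image.mp hy
    have hne : x' ≠ y' := fun h => hxy (by rw [h])
    have := hcol x' hx' y' hy' hne
    rwa [Sym2.map_pair_eq] at this

open Classical in
lemma count_supersets {n R : ℕ} (t : Finset (Fin n)) (h : t.card ≤ R) :
    ((powersetCard R (univ : Finset (Fin n))).filter (fun S => t ⊆ S)).card
      = (n - t.card).choose (R - t.card) := by
  have key : ((powersetCard R (univ : Finset (Fin n))).filter (fun S => t ⊆ S)).card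
      = (powersetCard (R - t.card) ((univ : Finset (Fin n)) \ t)).card := by
    apply card_bij' (fun S _ => S \ t) (fun u _ => u ∪ t)
    · intro S hS
      obtain ⟨hSP, htS⟩ := mem_filter.mp hS
      obtain ⟨-, hScard⟩ := mem_powersetCard.mp hSP
      refine mem_powersetCard.mpr ⟨sdiff_subset_sdiff (subset_univ S) le_rfl, ?_⟩
      rw [card_sdiff_of_subset htS, hScard]
    · intro u hu
      obtain ⟨husub, hucard⟩ := mem_powersetCard.mp hu
      have hdisj : Disjoint u t := by
        intro w hw1 hw2 x hx
        exact absurd (hw1 hx) (fun h => (mem_sdiff.mp (husub h)).2 (hw2 hx))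
      refine mem_filter.mpr ⟨mem_powersetCard.mpr ⟨subset_univ _, ?_⟩, subset_union_right⟩
      rw [card_union_of_disjoint hdisj, hucard]
      omega
    · intro S hS
      exact sdiff_union_of_subset (mem_filter.mp hS).2
    · intro u hu
      obtain ⟨husub, -⟩ := mem_powersetCard.mp hu
      have hdisj : Disjoint u t := by
        intro w hw1 hw2 x hx
        exact absurd (hw1 hx) (fun h => (mem_sdiff.mp (husub h)).2 (hw2 hx))
      exact union_sdiff_cancel_right hdisj
  rw [key, card_powersetCard, card_sdiff_of_subset (subset_univ t), card_univ, Fintype.card_fin]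

lemma two_mul_choose_two (R : ℕ) (h : 1 ≤ R) : R.choose 2 * 2 = R * (R - 1) := by
  obtain ⟨m, rfl⟩ : ∃ m, R = m + 1 := ⟨R - 1, by omega⟩
  have h1 := Nat.add_one_mul_choose_eq m 1
  simp [Nat.choose_one_right] at h1
  simp only [Nat.add_sub_cancel]
  omega


open Classical in
/-- Let `k ≥ 3`, `r ≥ 2`, `n ≥ R(k;r)` and `α = binom(R(k;r),k)⁻¹`.  For every coloring of the
edges of `K_n` with `r+1` colors, either more than `(α/2)·binom(n,k)` of the `k`-sets form a
monochromatic `K_k` whose color is among the first `r` colors, or more than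
`binom(n,2)/R(k;r)²` edges receive color `r+1`. -/
theorem stmt4 (k r n : ℕ) (hk : 3 ≤ k) (hr : 2 ≤ r) (hn : ramseyNumber k r ≤ n) :
    ∀ c : Sym2 (Fin n) → Fin (r + 1),
      (((ramseyNumber k r).choose k : ℝ)⁻¹ / 2 * (n.choose k : ℝ) <
        (((Finset.univ : Finset (Fin n)).powersetCard k).filter (fun t =>
          ∃ i : Fin (r + 1), (i : ℕ) < r ∧
            ∀ x ∈ t, ∀ y ∈ t, x ≠ y → c s(x, y) = i)).card)
      ∨ ((n.choose 2 : ℝ) / ((ramseyNumber k r : ℝ)) ^ 2 <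
        (((⊤ : SimpleGraph (Fin n)).edgeFinset.filter (fun e => c e = Fin.last r)).card : ℝ)) := by
  intro c
  by_contra hcon
  push_neg at hcon
  obtain ⟨hMle, hEle⟩ := hcon
  set R := ramseyNumber k r with hRdef
  have hr1 : 1 ≤ r := by omega
  have hsetne : {m | ArrowsClique m k r}.Nonempty :=
    ⟨rbnd r (r * (k - 1) + 1), arrowsClique_exists k r hr1⟩
  have hRamsey : ArrowsClique R k r := Nat.sInf_mem hsetne
  have hkR : k ≤ R := by
    obtain ⟨i, t, htc, -⟩ := hRamsey (fun _ => ⟨0, hr1⟩)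
    calc k = t.card := htc.symm
      _ ≤ (univ : Finset (Fin R)).card := card_le_card (subset_univ t)
      _ = R := by simp
  set M := (((Finset.univ : Finset (Fin n)).powersetCard k).filter (fun t =>
          ∃ i : Fin (r + 1), (i : ℕ) < r ∧
            ∀ x ∈ t, ∀ y ∈ t, x ≠ y → c s(x, y) = i)) with hMdef
  set E := (((⊤ : SimpleGraph (Fin n)).edgeFinset.filter (fun e => c e = Fin.last r))) with hEdef
  set G := ((powersetCard R (univ : Finset (Fin n))).filter
    (fun S => ∀ x ∈ S, ∀ y ∈ S, x ≠ y → c s(x, y) ≠ Fin.last r)) with hGdef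
  set B := ((powersetCard R (univ : Finset (Fin n))).filter
    (fun S => ¬ ∀ x ∈ S, ∀ y ∈ S, x ≠ y → c s(x, y) ≠ Fin.last r)) with hBdef
  -- every good set contains a monochromatic k-set avoiding the last color
  have goodHas : ∀ S ∈ G, ∃ t, t ∈ M ∧ t ⊆ S := by
    intro S hS
    obtain ⟨hSP, hSgood⟩ := mem_filter.mp hS
    obtain ⟨-, hScard⟩ := mem_powersetCard.mp hSP
    set g : Fin R → Fin n := fun a => ((S.equivFinOfCardEq hScard).symm a : Fin n) with hgdef
    have hginj : Function.Injective g := fun a b hab => by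
      have := Subtype.ext hab
      exact (S.equivFinOfCardEq hScard).symm.injective this
    have hgS : ∀ a, g a ∈ S := fun a => ((S.equivFinOfCardEq hScard).symm a).2
    set c' : Sym2 (Fin R) → Fin r :=
      fun d => ⟨min ((c (d.map g)) : ℕ) (r - 1), by omega⟩ with hc'def
    obtain ⟨i, t', ht'card, ht'col⟩ := hRamsey c'
    have hgood : ∀ a b : Fin R, a ≠ b → ((c s(g a, g b)) : ℕ) < r := by
      intro a b hab
      have hne := hSgood (g a) (hgS a) (g b) (hgS b) (fun h => hab (hginj h))
      have hlt := (c s(g a, g b)).isLt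
      have : ((c s(g a, g b)) : ℕ) ≠ r := fun h => hne (Fin.ext h)
      omega
    refine ⟨t'.image g, mem_filter.mpr ⟨mem_powersetCard.mpr ⟨subset_univ _, ?_⟩, ?_⟩,
      fun x hx => ?_⟩
    · rw [card_image_of_injective _ hginj, ht'card]
    · refine ⟨⟨(i : ℕ), by omega⟩, by simpa using i.isLt, ?_⟩
      intro x hx y hy hxy
      obtain ⟨a, ha, rfl⟩ := mem_image.mp hx
      obtain ⟨b, hb, rfl⟩ := mem_image.mp hy
      have hab : a ≠ b := fun h => hxy (by rw [h])
      have := ht'col a ha b hb hab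
      rw [hc'def] at this
      simp only [Sym2.map_pair_eq] at this
      have hval : min ((c s(g a, g b)) : ℕ) (r - 1) = (i : ℕ) := congrArg Fin.val this
      have hlt := hgood a b hab
      refine Fin.ext ?_
      show ((c s(g a, g b)) : ℕ) = (i : ℕ)
      omega
    · obtain ⟨a, -, rfl⟩ := mem_image.mp hx
      exact hgS a
  -- fiber counting for good sets
  have hG_le : G.card ≤ M.card * (n - k).choose (R - k) := by
    choose! Φ hΦM hΦsub using goodHas
    rw [card_eq_sum_card_fiberwise (fun S hS => hΦM S hS)]
    rw [← smul_eq_mul]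
    apply sum_le_card_nsmul
    intro t ht
    have hsub : G.filter (fun S => Φ S = t) ⊆
        (powersetCard R (univ : Finset (Fin n))).filter (fun S => t ⊆ S) := by
      intro S hS
      obtain ⟨hSG, hΦ⟩ := mem_filter.mp hS
      exact mem_filter.mpr ⟨(mem_filter.mp hSG).1, hΦ ▸ hΦsub S hSG⟩
    have htcard : t.card = k := (mem_powersetCard.mp (mem_filter.mp ht).1).2
    calc (G.filter (fun S => Φ S = t)).card
        ≤ ((powersetCard R (univ : Finset (Fin n))).filter (fun S => t ⊆ S)).card :=
          card_le_card hsub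
      _ = (n - k).choose (R - k) := by
          rw [count_supersets t (htcard ▸ hkR), htcard]
  -- every bad set contains an edge of the last color
  have badHas : ∀ S ∈ B, ∃ e, e ∈ E ∧ ∀ x ∈ e, x ∈ S := by
    intro S hS
    obtain ⟨hSP, hSbad⟩ := mem_filter.mp hS
    push_neg at hSbad
    obtain ⟨x, hx, y, hy, hxy, hcxy⟩ := hSbad
    refine ⟨s(x, y), mem_filter.mpr ⟨?_, hcxy⟩, ?_⟩
    · rw [SimpleGraph.mem_edgeFinset, SimpleGraph.mem_edgeSet]
      simpa using hxy
    · intro z hz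
      rcases Sym2.mem_iff.mp hz with rfl | rfl
      · exact hx
      · exact hy
  have hB_le : B.card ≤ E.card * (n - 2).choose (R - 2) := by
    have hn0 : 0 < n := by omega
    haveI : Nonempty (Sym2 (Fin n)) := ⟨s(⟨0, hn0⟩, ⟨0, hn0⟩)⟩
    choose! Ψ hΨE hΨmem using badHas
    rw [card_eq_sum_card_fiberwise (fun S hS => hΨE S hS), ← smul_eq_mul]
    apply sum_le_card_nsmul
    intro e he
    revert he
    induction e using Sym2.ind with
    | _ a b =>
      intro he
      have hab : a ≠ b := by
        have h1 := (mem_filter.mp he).1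
        rw [SimpleGraph.mem_edgeFinset, SimpleGraph.mem_edgeSet] at h1
        simpa using h1
      have h2 : ({a, b} : Finset (Fin n)).card = 2 := card_pair hab
      have hsub : B.filter (fun S => Ψ S = s(a, b)) ⊆
          (powersetCard R (univ : Finset (Fin n))).filter (fun S => {a, b} ⊆ S) := by
        intro S hS
        obtain ⟨hSB, hΨ⟩ := mem_filter.mp hS
        refine mem_filter.mpr ⟨(mem_filter.mp hSB).1, ?_⟩
        have hmemS := hΨmem S hSB
        rw [hΨ] at hmemS
        exact insert_subset (hmemS a (Sym2.mem_mk_left a b))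
          (singleton_subset_iff.mpr (hmemS b (Sym2.mem_mk_right a b)))
      calc (B.filter (fun S => Ψ S = s(a, b))).card
          ≤ ((powersetCard R (univ : Finset (Fin n))).filter (fun S => {a, b} ⊆ S)).card :=
            card_le_card hsub
        _ = (n - 2).choose (R - 2) := by
            rw [count_supersets _ (by rw [h2]; omega), h2]
  have hGB : G.card + B.card = n.choose R := by
    rw [hGdef, hBdef, card_filter_add_card_filter_not, card_powersetCard, card_univ,
      Fintype.card_fin]
  -- arithmetic endgame
  have hRn : R ≤ n := hn
  have hR3 : 3 ≤ R := hk.trans hkR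
  have id1 : n.choose R * R.choose k = n.choose k * (n - k).choose (R - k) :=
    Nat.choose_mul hkR
  have id2 : n.choose R * R.choose 2 = n.choose 2 * (n - 2).choose (R - 2) :=
    Nat.choose_mul (by omega)
  have hQ2 := two_mul_choose_two R (by omega)
  have hposA : 0 < n.choose R := Nat.choose_pos hRn
  have hposK : 0 < R.choose k := Nat.choose_pos hkR
  have hposD : 0 < (n - k).choose (R - k) := Nat.choose_pos (by omega)
  -- cast everything to ℝ
  have hGr : (G.card : ℝ) ≤ (M.card : ℝ) * ((n - k).choose (R - k) : ℝ) := by exact_mod_cast hG_le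
  have hBr : (B.card : ℝ) ≤ (E.card : ℝ) * ((n - 2).choose (R - 2) : ℝ) := by exact_mod_cast hB_le
  have hGBr : (G.card : ℝ) + (B.card : ℝ) = (n.choose R : ℝ) := by exact_mod_cast hGB
  have id1r : (n.choose R : ℝ) * (R.choose k : ℝ)
      = (n.choose k : ℝ) * ((n - k).choose (R - k) : ℝ) := by exact_mod_cast id1
  have id2r : (n.choose R : ℝ) * (R.choose 2 : ℝ)
      = (n.choose 2 : ℝ) * ((n - 2).choose (R - 2) : ℝ) := by exact_mod_cast id2
  have hQ2r : (R.choose 2 : ℝ) * 2 = (R : ℝ) * ((R : ℝ) - 1) := by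
    have h0 : ((R.choose 2 * 2 : ℕ) : ℝ) = ((R * (R - 1) : ℕ) : ℝ) := by rw [hQ2]
    push_cast [Nat.cast_sub (by omega : 1 ≤ R)] at h0
    exact h0
  have hApos : (0 : ℝ) < (n.choose R : ℝ) := by exact_mod_cast hposA
  have hKne : ((R.choose k : ℕ) : ℝ) ≠ 0 := by positivity
  have hDpos : (0 : ℝ) ≤ ((n - k).choose (R - k) : ℝ) := by positivity
  have hRpos : (0 : ℝ) < ((R : ℝ)) ^ 2 := by positivity
  have hMD : (M.card : ℝ) * ((n - k).choose (R - k) : ℝ) ≤ (n.choose R : ℝ) / 2 := by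
    calc (M.card : ℝ) * ((n - k).choose (R - k) : ℝ)
        ≤ ((R.choose k : ℝ)⁻¹ / 2 * (n.choose k : ℝ)) * ((n - k).choose (R - k) : ℝ) :=
          mul_le_mul_of_nonneg_right hMle hDpos
      _ = ((n.choose k : ℝ) * ((n - k).choose (R - k) : ℝ)) * ((R.choose k : ℝ))⁻¹ / 2 := by
          ring
      _ = ((n.choose R : ℝ) * (R.choose k : ℝ)) * ((R.choose k : ℝ))⁻¹ / 2 := by rw [← id1r]
      _ = (n.choose R : ℝ) / 2 := by rw [mul_inv_cancel_right₀ hKne]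
  have hEY : (E.card : ℝ) * ((n - 2).choose (R - 2) : ℝ)
      ≤ (n.choose R : ℝ) * (R.choose 2 : ℝ) / (R : ℝ) ^ 2 := by
    calc (E.card : ℝ) * ((n - 2).choose (R - 2) : ℝ)
        ≤ ((n.choose 2 : ℝ) / (R : ℝ) ^ 2) * ((n - 2).choose (R - 2) : ℝ) :=
          mul_le_mul_of_nonneg_right hEle (by positivity)
      _ = ((n.choose 2 : ℝ) * ((n - 2).choose (R - 2) : ℝ)) / (R : ℝ) ^ 2 := by ring
      _ = (n.choose R : ℝ) * (R.choose 2 : ℝ) / (R : ℝ) ^ 2 := by rw [← id2r]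
  have h3 : (n.choose R : ℝ) / 2 ≤ (n.choose R : ℝ) * (R.choose 2 : ℝ) / (R : ℝ) ^ 2 := by
    linarith
  rw [div_le_div_iff₀ two_pos hRpos] at h3
  have hR3r : (3 : ℝ) ≤ (R : ℝ) := by exact_mod_cast hR3
  nlinarith [h3, hQ2r, hR3r, hApos]
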